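/- Let M be a symmetric positive definite n×n real matrix and Σ symmetric positive semidefinite, μ ∈ ℝⁿ entrywise positive, γ_R ≥ 0. Define η* by D(μ)η* := M(γ_R Σ + 2M)⁻¹(γ_R Σ + M)1, and p* := 1 − M⁻¹D(μ)η*. Then the reinsurer's welfare gain ω_R := (D(μ)η*)ᵀ p* − (γ_R/2)(p*)ᵀ Σ p* equals (1/2)·1ᵀ(γ_R M⁻¹ΣM⁻¹ + 2M⁻¹)⁻¹ 1. -/

import Mathlib

open Matrix BigOperators

theorem stmt16 {n : ℕ} (M S : Matrix (Fin n) (Fin n) ℝ) (hM : M.PosDef) (hS : S.PosSemidef)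
    (μ : Fin n → ℝ) (hμ : ∀ i, 0 < μ i) (γR : ℝ) (hγR : 0 ≤ γR)
    (η p : Fin n → ℝ)
    (hη : (Matrix.diagonal μ).mulVec η =
      (M * (γR • S + (2 : ℝ) • M)⁻¹ * (γR • S + M)).mulVec 1)
    (hp : p = 1 - M⁻¹.mulVec ((Matrix.diagonal μ).mulVec η)) :
    (Matrix.diagonal μ).mulVec η ⬝ᵥ p - (γR / 2) * (p ⬝ᵥ S.mulVec p)
      = (1 / 2 : ℝ) *
        ((1 : Fin n → ℝ) ⬝ᵥ ((γR • (M⁻¹ * S * M⁻¹) + (2 : ℝ) • M⁻¹)⁻¹.mulVec 1)) := by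
  set A : Matrix (Fin n) (Fin n) ℝ := γR • S + (2 : ℝ) • M with hA
  set B : Matrix (Fin n) (Fin n) ℝ := γR • S + M with hB
  -- A is positive definite
  have hSsm : (γR • S).PosSemidef := by
    constructor
    · show (γR • S)ᴴ = γR • S
      rw [conjTranspose_smul, hS.1]
      simp
    · intro x
      exact (hS.smul hγR).2 x
  have h2M : ((2 : ℝ) • M).PosDef := by
    constructor
    · show ((2:ℝ) • M)ᴴ = (2:ℝ) • M
      rw [conjTranspose_smul, hM.1]
      simp
    · intro x hx
      exact (hM.smul (two_pos : (0:ℝ) < 2)).2 hx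
  have hApd : A.PosDef := Matrix.PosDef.posSemidef_add hSsm h2M
  have hAdet : IsUnit A.det := isUnit_iff_ne_zero.2 (ne_of_gt hApd.det_pos)
  have hMdet : IsUnit M.det := isUnit_iff_ne_zero.2 (ne_of_gt hM.det_pos)
  have hAAinv : A * A⁻¹ = 1 := mul_nonsing_inv A hAdet
  have hAinvA : A⁻¹ * A = 1 := nonsing_inv_mul A hAdet
  have hMinvM : M⁻¹ * M = 1 := nonsing_inv_mul M hMdet
  have hMMinv : M * M⁻¹ = 1 := mul_nonsing_inv M hMdet
  -- symmetry
  have hMsymm : Mᵀ = M := hM.1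
  have hSsymm : Sᵀ = S := hS.1
  have hAsymm : Aᵀ = A := hApd.1
  have hAinvsymm : (A⁻¹)ᵀ = A⁻¹ := by rw [transpose_nonsing_inv, hAsymm]
  -- γR • S = A - 2 • M and B = A - M
  have hgS : γR • S = A - (2 : ℝ) • M := by rw [hA]; module
  have hBA : B = A - M := by rw [hB, hA]; module
  -- the RHS inverse matrix
  have hRinv : (γR • (M⁻¹ * S * M⁻¹) + (2 : ℝ) • M⁻¹)⁻¹ = M * A⁻¹ * M := by
    have h1 : γR • (M⁻¹ * S * M⁻¹) + (2 : ℝ) • M⁻¹ = M⁻¹ * A * M⁻¹ := by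
      rw [hA, Matrix.mul_add, Matrix.add_mul, Matrix.mul_smul, Matrix.mul_smul,
        Matrix.smul_mul, Matrix.smul_mul, Matrix.mul_assoc M⁻¹ M M⁻¹, hMMinv,
        Matrix.mul_one]
    rw [h1, Matrix.mul_inv_rev, Matrix.mul_inv_rev,
      Matrix.nonsing_inv_nonsing_inv M hMdet, Matrix.mul_assoc]
  -- D(μ) η = (M * A⁻¹ * B).mulVec 1
  have hDη : (Matrix.diagonal μ).mulVec η = (M * A⁻¹ * B).mulVec 1 := hη
  -- p = (A⁻¹ * M).mulVec 1
  have hone : (1 : Matrix (Fin n) (Fin n) ℝ) - A⁻¹ * B = A⁻¹ * M := by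
    rw [hBA, Matrix.mul_sub, hAinvA, sub_sub_cancel]
  have hp' : p = (A⁻¹ * M).mulVec 1 := by
    rw [hp, hDη, mulVec_mulVec, ← Matrix.mul_assoc, ← Matrix.mul_assoc, hMinvM,
      Matrix.one_mul, ← hone, Matrix.sub_mulVec, Matrix.one_mulVec]
  -- helper: dot products as quadratic forms in 1
  have key : ∀ X Y : Matrix (Fin n) (Fin n) ℝ,
      X.mulVec 1 ⬝ᵥ Y.mulVec 1 = (1 : Fin n → ℝ) ⬝ᵥ (Xᵀ * Y).mulVec 1 := by
    intro X Y
    rw [Matrix.dotProduct_mulVec, Matrix.dotProduct_mulVec]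
    congr 1
    rw [← Matrix.vecMul_vecMul, Matrix.vecMul_transpose]
  have hterm1 : (Matrix.diagonal μ).mulVec η ⬝ᵥ p
      = (1 : Fin n → ℝ) ⬝ᵥ ((M * A⁻¹ * B)ᵀ * (A⁻¹ * M)).mulVec 1 := by
    rw [hDη, hp', key]
  have hterm2 : p ⬝ᵥ S.mulVec p
      = (1 : Fin n → ℝ) ⬝ᵥ ((A⁻¹ * M)ᵀ * (S * (A⁻¹ * M))).mulVec 1 := by
    rw [hp', mulVec_mulVec, key]
  -- transposes
  have hBsymm : Bᵀ = B := by
    rw [hB, Matrix.transpose_add, Matrix.transpose_smul, hSsymm, hMsymm]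
  have hT1 : (M * A⁻¹ * B)ᵀ = B * A⁻¹ * M := by
    rw [Matrix.transpose_mul, Matrix.transpose_mul, hMsymm, hAinvsymm, hBsymm,
      Matrix.mul_assoc]
  have hT2 : (A⁻¹ * M)ᵀ = M * A⁻¹ := by
    rw [Matrix.transpose_mul, hMsymm, hAinvsymm]
  -- the central matrix identity
  have h1 : (A - M) * A⁻¹ * M * (A⁻¹ * M)
      = M * A⁻¹ * M - M * A⁻¹ * M * (A⁻¹ * M) := by
    rw [Matrix.sub_mul, Matrix.sub_mul, Matrix.sub_mul, hAAinv, Matrix.one_mul,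
      ← Matrix.mul_assoc M A⁻¹ M]
  have h2 : M * A⁻¹ * ((A - (2:ℝ) • M) * (A⁻¹ * M))
      = M * A⁻¹ * M - (2:ℝ) • (M * A⁻¹ * M * (A⁻¹ * M)) := by
    rw [Matrix.sub_mul, Matrix.mul_sub, ← Matrix.mul_assoc A A⁻¹ M, hAAinv,
      Matrix.one_mul, Matrix.smul_mul, Matrix.mul_smul]
    congr 2
    rw [← Matrix.mul_assoc, ← Matrix.mul_assoc]
  have hident : (M * A⁻¹ * B)ᵀ * (A⁻¹ * M)
      - (γR / 2) • ((A⁻¹ * M)ᵀ * (S * (A⁻¹ * M)))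
      = ((1:ℝ)/2) • (M * A⁻¹ * M) := by
    rw [hT1, hT2]
    have hsmul : (γR / 2) • (M * A⁻¹ * (S * (A⁻¹ * M)))
        = ((1:ℝ)/2) • (M * A⁻¹ * ((γR • S) * (A⁻¹ * M))) := by
      rw [Matrix.smul_mul, Matrix.mul_smul, smul_smul]
      congr 1
      ring
    rw [hsmul, hgS, hBA, h1, h2]
    module
  have conv1 : ∀ (c : ℝ) (Z : Matrix (Fin n) (Fin n) ℝ),
      c * ((1 : Fin n → ℝ) ⬝ᵥ Z.mulVec 1) = (1 : Fin n → ℝ) ⬝ᵥ (c • Z).mulVec 1 := by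
    intro c Z
    rw [Matrix.smul_mulVec, dotProduct_smul, smul_eq_mul]
  rw [hterm1, hterm2, hRinv, conv1 (γR / 2), conv1 ((1:ℝ)/2), ← hident,
    Matrix.sub_mulVec, dotProduct_sub]
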